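/- For a N(μ₀, σ₁²) prior Π₁ and N(μ₀, σ₂²) prior Π₂ on the mean μ of a N(μ,1/n) observation, with prior predictives M_iT = N(μ₀, 1/n + σ_i²), the probability M_{1T}(P₂(t₀) ≤ γ) equals 1 − G₁(((1/n+σ₂²)/(1/n+σ₁²)) · G₁⁻¹(1−γ)), where G₁ is the Chi-squared(1) CDF and P₂(t₀) = 1 − G₁((t₀−μ₀)²/(1/n+σ₂²)). -/

import Mathlib

open MeasureTheory Real Set

/-- Chi-squared(1) density. -/
noncomputable def chi1Pdf (u : ℝ) : ℝ :=
  if 0 < u then (Real.sqrt (2 * Real.pi * u))⁻¹ * Real.exp (-u / 2) else 0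

/-- Chi-squared(1) CDF `G₁`. -/
noncomputable def G1 (x : ℝ) : ℝ := ∫ u in Set.Iic x, chi1Pdf u

/-- Quantile function (generalized inverse) of `G₁`. -/
noncomputable def G1inv (p : ℝ) : ℝ := sInf {x : ℝ | p ≤ G1 x}

/-- Normal density with mean `m` and variance `v`. -/
noncomputable def normalPdf (m v t : ℝ) : ℝ :=
  (Real.sqrt (2 * Real.pi * v))⁻¹ * Real.exp (-(t - m) ^ 2 / (2 * v))

lemma chi1Pdf_nonneg (u : ℝ) : 0 ≤ chi1Pdf u := by
  unfold chi1Pdf; split <;> positivity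

lemma chi1Pdf_measurable : Measurable chi1Pdf := by
  unfold chi1Pdf
  exact Measurable.ite measurableSet_Ioi (by fun_prop) measurable_const

lemma chi1Pdf_contOn : ContinuousOn chi1Pdf (Ioi 0) := by
  have : ContinuousOn (fun u : ℝ => (Real.sqrt (2 * Real.pi * u))⁻¹ * Real.exp (-u / 2)) (Ioi 0) := by
    apply ContinuousOn.mul
    · apply ContinuousOn.inv₀
      · fun_prop
      · intro x hx
        have : (0:ℝ) < 2 * Real.pi * x := by have := Real.pi_pos; have : (0:ℝ) < x := hx; positivity
        positivity
    · fun_prop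
  exact this.congr (fun u hu => by rw [chi1Pdf, if_pos (show (0:ℝ) < u from hu)])

lemma chi1Pdf_integrableOn_Ioc (x : ℝ) : IntegrableOn chi1Pdf (Ioc 0 x) := by
  rcases le_or_gt x 0 with hx | hx
  · rw [Ioc_eq_empty (by exact not_lt.mpr hx)]; exact integrableOn_empty
  have hmaj : IntegrableOn (fun u : ℝ => (Real.sqrt (2 * Real.pi))⁻¹ * u ^ (-(1:ℝ)/2)) (Ioc 0 x) := by
    have := (intervalIntegral.intervalIntegrable_rpow' (a := 0) (b := x) (r := -(1:ℝ)/2) (by norm_num))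
    rw [intervalIntegrable_iff_integrableOn_Ioc_of_le hx.le] at this
    exact this.const_mul _
  refine hmaj.mono' (chi1Pdf_measurable.aestronglyMeasurable.restrict) ?_
  filter_upwards [ae_restrict_mem measurableSet_Ioc] with u hu
  have hu0 : 0 < u := hu.1
  rw [Real.norm_eq_abs, abs_of_nonneg (chi1Pdf_nonneg u)]
  unfold chi1Pdf
  rw [if_pos hu0]
  have h1 : Real.sqrt (2 * Real.pi * u) = Real.sqrt (2 * Real.pi) * Real.sqrt u :=
    Real.sqrt_mul (by positivity) u
  have h2 : u ^ (-(1:ℝ)/2) = (Real.sqrt u)⁻¹ := by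
    rw [show (-(1:ℝ)/2) = -(1/2:ℝ) by ring, Real.rpow_neg hu0.le, Real.sqrt_eq_rpow]
  rw [h1, h2, mul_inv]
  have hs : (0:ℝ) < Real.sqrt u := Real.sqrt_pos.mpr hu0
  have he : Real.exp (-u/2) ≤ 1 := Real.exp_le_one_iff.mpr (by linarith)
  calc (Real.sqrt (2*Real.pi))⁻¹ * (Real.sqrt u)⁻¹ * Real.exp (-u/2)
      ≤ (Real.sqrt (2*Real.pi))⁻¹ * (Real.sqrt u)⁻¹ * 1 := by
        apply mul_le_mul_of_nonneg_left he; positivity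
    _ = (Real.sqrt (2*Real.pi))⁻¹ * (Real.sqrt u)⁻¹ := by ring

lemma chi1Pdf_integrableOn_Icc (x : ℝ) : IntegrableOn chi1Pdf (Icc 0 x) := by
  rw [integrableOn_Icc_iff_integrableOn_Ioc]
  exact chi1Pdf_integrableOn_Ioc x

lemma chi1Pdf_integrableOn_Iic (x : ℝ) : IntegrableOn chi1Pdf (Iic x) := by
  have h0 : IntegrableOn chi1Pdf (Iic 0) := by
    have : EqOn chi1Pdf 0 (Iic 0) := fun u hu => by
      rw [chi1Pdf, if_neg (by simpa using not_lt.mpr (mem_Iic.mp hu))]; rfl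
    exact (integrableOn_congr_fun this measurableSet_Iic).mpr (integrableOn_zero)
  rcases le_or_gt x 0 with hx | hx
  · exact h0.mono_set (Iic_subset_Iic.mpr hx)
  · rw [← Iic_union_Ioc_eq_Iic hx.le]
    exact h0.union (chi1Pdf_integrableOn_Ioc x)

lemma G1_nonpos {x : ℝ} (hx : x ≤ 0) : G1 x = 0 := by
  apply setIntegral_eq_zero_of_forall_eq_zero
  intro u hu
  rw [chi1Pdf, if_neg (by simp only [not_lt]; exact le_trans (mem_Iic.mp hu) hx)]

lemma G1_eq_interval {x : ℝ} (hx : 0 ≤ x) : G1 x = ∫ u in (0:ℝ)..x, chi1Pdf u := by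
  rw [intervalIntegral.integral_of_le hx, G1, ← Iic_union_Ioc_eq_Iic hx,
    setIntegral_union (Iic_disjoint_Ioc le_rfl) measurableSet_Ioc
      (chi1Pdf_integrableOn_Iic 0) (chi1Pdf_integrableOn_Ioc x)]
  rw [show (∫ u in Iic (0:ℝ), chi1Pdf u) = G1 0 from rfl, G1_nonpos le_rfl, zero_add]

lemma normalPdf_cont : Continuous (normalPdf 0 1) := by
  unfold normalPdf; fun_prop

lemma G1_sqrt {x : ℝ} (hx : 0 ≤ x) :
    G1 x = 2 * ∫ z in (0:ℝ)..Real.sqrt x, normalPdf 0 1 z := by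
  have hsx : 0 ≤ Real.sqrt x := Real.sqrt_nonneg x
  have key : (∫ z in (0:ℝ)..Real.sqrt x, (chi1Pdf ∘ (fun z => z ^ 2)) z * (2 * z))
      = ∫ u in ((0:ℝ)^2)..((Real.sqrt x)^2), chi1Pdf u := by
    apply intervalIntegral.integral_comp_mul_deriv''' (f := fun z => z ^ 2) (f' := fun z => 2 * z)
    · fun_prop
    · intro z _
      have := hasDerivAt_pow 2 z
      simpa using this.hasDerivWithinAt
    · apply chi1Pdf_contOn.mono
      rintro u ⟨z, hz, rfl⟩
      rw [min_eq_left hsx, max_eq_right hsx] at hz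
      exact pow_pos hz.1 2
    · apply (chi1Pdf_integrableOn_Icc x).mono_set
      rintro u ⟨z, hz, rfl⟩
      rw [uIcc_of_le hsx] at hz
      constructor
      · positivity
      · calc z ^ 2 ≤ (Real.sqrt x) ^ 2 := by
              apply pow_le_pow_left₀ hz.1 hz.2
          _ = x := Real.sq_sqrt hx
    · -- integrability of z ↦ chi1Pdf (z^2) * (2z) on uIcc
      have hb : IntegrableOn (fun _ : ℝ => 2 * (Real.sqrt (2 * Real.pi))⁻¹)
          (Set.uIcc 0 (Real.sqrt x)) :=
        (integrableOn_const_iff).mpr (Or.inr (by rw [uIcc_of_le hsx, Real.volume_Icc]; exact ENNReal.ofReal_lt_top))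
      refine hb.mono' ?_ ?_
      · exact ((chi1Pdf_measurable.comp (by fun_prop)).mul (by fun_prop)).aestronglyMeasurable.restrict
      · filter_upwards [ae_restrict_mem measurableSet_uIcc] with z hz
        rw [uIcc_of_le hsx] at hz
        rcases eq_or_lt_of_le hz.1 with h0 | h0
        · simp only [← h0, Function.comp]
          rw [show ((0:ℝ)) ^ 2 = 0 by ring, chi1Pdf, if_neg (lt_irrefl 0)]
          simp
        · have hz2 : (0:ℝ) < z ^ 2 := by positivity
          simp only [Function.comp]
          rw [chi1Pdf, if_pos hz2, norm_mul, Real.norm_eq_abs, Real.norm_eq_abs]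
          have h1 : Real.sqrt (2 * Real.pi * z ^ 2) = Real.sqrt (2 * Real.pi) * z := by
            rw [Real.sqrt_mul (by positivity), Real.sqrt_sq h0.le]
          rw [h1, abs_of_nonneg (by positivity : (0:ℝ) ≤ (Real.sqrt (2*Real.pi) * z)⁻¹ * Real.exp (-z^2/2)),
            abs_of_nonneg (by positivity : (0:ℝ) ≤ 2 * z)]
          have he : Real.exp (-z^2/2) ≤ 1 := Real.exp_le_one_iff.mpr (by nlinarith)
          have hsp : (0:ℝ) < Real.sqrt (2 * Real.pi) := Real.sqrt_pos.mpr (by positivity)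
          rw [mul_inv]
          calc (Real.sqrt (2*Real.pi))⁻¹ * z⁻¹ * Real.exp (-z^2/2) * (2 * z)
              ≤ (Real.sqrt (2*Real.pi))⁻¹ * z⁻¹ * 1 * (2 * z) := by
                apply mul_le_mul_of_nonneg_right (mul_le_mul_of_nonneg_left he (by positivity)) (by positivity)
            _ = 2 * (Real.sqrt (2*Real.pi))⁻¹ := by field_simp
  have hcong : (∫ z in (0:ℝ)..Real.sqrt x, (chi1Pdf ∘ (fun z => z ^ 2)) z * (2 * z))
      = ∫ z in (0:ℝ)..Real.sqrt x, 2 * normalPdf 0 1 z := by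
    apply intervalIntegral.integral_congr_ae
    filter_upwards with z hz
    rw [uIoc_of_le hsx] at hz
    have hz0 : 0 < z := hz.1
    simp only [Function.comp]
    rw [chi1Pdf, if_pos (by positivity : (0:ℝ) < z ^ 2), normalPdf]
    have h1 : Real.sqrt (2 * Real.pi * z ^ 2) = Real.sqrt (2 * Real.pi * 1) * z := by
      rw [mul_one, Real.sqrt_mul (by positivity), Real.sqrt_sq hz0.le]
    rw [h1]
    have hsp : (0:ℝ) < Real.sqrt (2 * Real.pi * 1) := Real.sqrt_pos.mpr (by positivity)
    have hexp : Real.exp (-z ^ 2 / 2) = Real.exp (-(z - 0) ^ 2 / (2 * 1)) := by ring_nf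
    rw [hexp, mul_inv]
    field_simp
  rw [Real.sq_sqrt hx, show ((0:ℝ)^2) = 0 by ring] at key
  rw [G1_eq_interval hx, ← key, hcong, intervalIntegral.integral_const_mul]

lemma normalPdf_eq_gaussian {m v : ℝ} (hv : 0 < v) :
    normalPdf m v = ProbabilityTheory.gaussianPDFReal m ⟨v, hv.le⟩ := rfl

lemma normalPdf_integrable {m v : ℝ} (hv : 0 < v) : Integrable (normalPdf m v) := by
  rw [normalPdf_eq_gaussian hv]
  exact ProbabilityTheory.integrable_gaussianPDFReal m ⟨v, hv.le⟩

lemma normalPdf_integral_one {m v : ℝ} (hv : 0 < v) : ∫ t, normalPdf m v t = 1 := by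
  rw [normalPdf_eq_gaussian hv]
  refine ProbabilityTheory.integral_gaussianPDFReal_eq_one m ?_
  exact fun h => hv.ne' (congrArg NNReal.toReal h)

lemma normalPdf_even (z : ℝ) : normalPdf 0 1 (-z) = normalPdf 0 1 z := by
  unfold normalPdf; ring_nf

lemma G1_mono : Monotone G1 := fun x y hxy =>
  setIntegral_mono_set (chi1Pdf_integrableOn_Iic y) (ae_of_all _ chi1Pdf_nonneg)
    (HasSubset.Subset.eventuallyLE (Iic_subset_Iic.mpr hxy))

lemma G1_strictMonoOn : StrictMonoOn G1 (Ici 0) := by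
  intro x hx y hy hxy
  have hint : IntervalIntegrable chi1Pdf volume x y := by
    rw [intervalIntegrable_iff_integrableOn_Ioc_of_le hxy.le]
    exact (chi1Pdf_integrableOn_Ioc y).mono_set (Ioc_subset_Ioc_left hx)
  have hpos : (0:ℝ) < ∫ u in x..y, chi1Pdf u := by
    apply intervalIntegral.intervalIntegral_pos_of_pos_on hint _ hxy
    intro u hu
    have hu0 : 0 < u := lt_of_le_of_lt hx hu.1
    rw [chi1Pdf, if_pos hu0]
    positivity
  have h0y : IntervalIntegrable chi1Pdf volume 0 y := by
    rw [intervalIntegrable_iff_integrableOn_Ioc_of_le (le_trans hx hxy.le)]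
    exact chi1Pdf_integrableOn_Ioc y
  have h0x : IntervalIntegrable chi1Pdf volume 0 x := by
    rw [intervalIntegrable_iff_integrableOn_Ioc_of_le hx]
    exact chi1Pdf_integrableOn_Ioc x
  have hsub := intervalIntegral.integral_interval_sub_left h0y h0x
  have : G1 y - G1 x = ∫ u in x..y, chi1Pdf u := by
    rw [G1_eq_interval (mem_Ici.mp hx), G1_eq_interval (le_trans hx hxy.le), hsub]
  linarith

lemma G1_contOn : ContinuousOn G1 (Ici 0) := by
  have hc : Continuous fun x : ℝ => 2 * ∫ z in (0:ℝ)..Real.sqrt x, normalPdf 0 1 z := by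
    apply Continuous.mul continuous_const
    exact ((normalPdf_integrable one_pos).continuous_primitive 0).comp Real.continuous_sqrt
  exact hc.continuousOn.congr fun x hx => G1_sqrt (mem_Ici.mp hx)

lemma integral_Ioi_phi : ∫ z in Ioi (0:ℝ), normalPdf 0 1 z = 1/2 := by
  have hint := normalPdf_integrable (m := 0) one_pos
  have htot : (∫ z in Iic (0:ℝ), normalPdf 0 1 z) + ∫ z in Ioi (0:ℝ), normalPdf 0 1 z = 1 := by
    have hu := setIntegral_union (f := normalPdf 0 1) (μ := volume)
      (Iic_disjoint_Ioi (le_refl (0:ℝ))) measurableSet_Ioi hint.integrableOn hint.integrableOn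
    rw [Iic_union_Ioi] at hu
    rw [← hu, setIntegral_univ]
    exact normalPdf_integral_one one_pos
  have hsym : (∫ z in Iic (0:ℝ), normalPdf 0 1 z) = ∫ z in Ioi (0:ℝ), normalPdf 0 1 z := by
    have := integral_comp_neg_Iic (c := (0:ℝ)) (f := normalPdf 0 1)
    simp only [normalPdf_even, neg_zero] at this
    rw [this]
  linarith

lemma G1_tendsto_one : Filter.Tendsto G1 Filter.atTop (nhds 1) := by
  have h1 : Filter.Tendsto (fun x : ℝ => 2 * ∫ z in (0:ℝ)..Real.sqrt x, normalPdf 0 1 z)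
      Filter.atTop (nhds 1) := by
    have h2 : Filter.Tendsto (fun x : ℝ => ∫ z in (0:ℝ)..Real.sqrt x, normalPdf 0 1 z)
        Filter.atTop (nhds (1/2)) := by
      rw [← integral_Ioi_phi]
      exact intervalIntegral_tendsto_integral_Ioi 0
        (normalPdf_integrable one_pos).integrableOn (by
          apply Filter.tendsto_atTop_atTop.mpr
          intro b
          refine ⟨(max b 0)^2, fun x hx => ?_⟩
          calc b ≤ max b 0 := le_max_left _ _
            _ = Real.sqrt ((max b 0)^2) := (Real.sqrt_sq (le_max_right _ _)).symm
            _ ≤ Real.sqrt x := Real.sqrt_le_sqrt hx)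
    have := h2.const_mul (2:ℝ)
    norm_num at this
    exact this
  apply h1.congr'
  filter_upwards [Filter.eventually_ge_atTop (0:ℝ)] with x hx
  exact (G1_sqrt hx).symm

lemma G1inv_iff {p : ℝ} (hp0 : 0 < p) (hp1 : p < 1) :
    0 < G1inv p ∧ ∀ y : ℝ, (p ≤ G1 y ↔ G1inv p ≤ y) := by
  obtain ⟨b, hbp, hb0⟩ : ∃ b : ℝ, p ≤ G1 b ∧ 0 ≤ b := by
    have h1 : ∀ᶠ x in Filter.atTop, p ≤ G1 x :=
      G1_tendsto_one.eventually (eventually_ge_nhds hp1)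
    exact (h1.and (Filter.eventually_ge_atTop 0)).exists
  obtain ⟨x0, hx0mem, hx0⟩ : ∃ x0 ∈ Icc (0:ℝ) b, G1 x0 = p := by
    have hIVT := intermediate_value_Icc hb0 (G1_contOn.mono (Icc_subset_Ici_self : Icc (0:ℝ) b ⊆ Ici 0))
    exact hIVT ⟨by rw [G1_nonpos le_rfl]; exact hp0.le, hbp⟩
  have hx0pos : 0 < x0 := by
    rcases eq_or_lt_of_le hx0mem.1 with h | h
    · rw [← h, G1_nonpos le_rfl] at hx0; linarith
    · exact h
  have hS : {x : ℝ | p ≤ G1 x} = Ici x0 := by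
    ext y
    simp only [mem_setOf_eq, mem_Ici]
    constructor
    · intro hy
      by_contra hlt
      push_neg at hlt
      rcases le_or_gt y 0 with h | h
      · rw [G1_nonpos h] at hy; linarith
      · have := G1_strictMonoOn h.le hx0pos.le hlt
        rw [hx0] at this; linarith
    · intro hy
      rw [← hx0]; exact G1_mono hy
  have hinv : G1inv p = x0 := by rw [G1inv, hS, csInf_Ici]
  refine ⟨hinv ▸ hx0pos, fun y => ?_⟩
  rw [hinv, show (p ≤ G1 y) = (y ∈ {x : ℝ | p ≤ G1 x}) from rfl, hS, mem_Ici]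

lemma normalPdf_scale {m v : ℝ} (hv : 0 < v) (t : ℝ) :
    normalPdf m v t = (Real.sqrt v)⁻¹ * normalPdf 0 1 ((t - m) / Real.sqrt v) := by
  have hs : 0 < Real.sqrt v := Real.sqrt_pos.mpr hv
  unfold normalPdf
  have h1 : Real.sqrt (2 * Real.pi * v) = Real.sqrt (2 * Real.pi * 1) * Real.sqrt v := by
    rw [mul_one, ← Real.sqrt_mul (by positivity) v]
  have h2 : -((t - m) / Real.sqrt v - 0) ^ 2 / (2 * 1) = -(t - m) ^ 2 / (2 * v) := by
    rw [sub_zero, div_pow, Real.sq_sqrt hv.le]; ring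
  rw [h1, h2, mul_inv]; ring

/-- For normal priors `N(μ₀, σᵢ²)` on the mean of a `N(μ, 1/n)` observation,
with prior predictives `M_iT = N(μ₀, 1/n + σᵢ²)` and
`P₂(t₀) = 1 − G₁((t₀ − μ₀)²/(1/n + σ₂²))`, one has
`M₁T(P₂(t₀) ≤ γ) = 1 − G₁(((1/n+σ₂²)/(1/n+σ₁²)) G₁⁻¹(1−γ))`. -/
theorem stmt0 (n : ℕ) (hn : 0 < n) (μ0 σ1 σ2 : ℝ) (hσ1 : 0 < σ1) (hσ2 : 0 < σ2)
    (γ : ℝ) (hγ : γ ∈ Set.Ioo (0 : ℝ) 1) :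
    (∫ t in {t : ℝ | 1 - G1 ((t - μ0) ^ 2 / (1 / n + σ2 ^ 2)) ≤ γ},
        normalPdf μ0 (1 / n + σ1 ^ 2) t)
      = 1 - G1 (((1 / n + σ2 ^ 2) / (1 / n + σ1 ^ 2)) * G1inv (1 - γ)) := by
  obtain ⟨hγ0, hγ1⟩ := hγ
  have hn' : (0:ℝ) < 1 / n := by positivity
  set v1 : ℝ := 1 / n + σ1 ^ 2 with hv1def
  set v2 : ℝ := 1 / n + σ2 ^ 2 with hv2def
  have hv1 : 0 < v1 := by positivity
  have hv2 : 0 < v2 := by positivity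
  obtain ⟨hc0, hciff⟩ := G1inv_iff (p := 1 - γ) (by linarith) (by linarith)
  set c : ℝ := G1inv (1 - γ) with hcdef
  set a : ℝ := Real.sqrt (c * v2) with hadef
  have ha0 : 0 < a := Real.sqrt_pos.mpr (mul_pos hc0 hv2)
  have ha2 : a ^ 2 = c * v2 := Real.sq_sqrt (mul_pos hc0 hv2).le
  set s : ℝ := Real.sqrt v1 with hsdef
  have hs0 : 0 < s := Real.sqrt_pos.mpr hv1
  have hs2 : s ^ 2 = v1 := Real.sq_sqrt hv1.le
  -- rewrite the set
  have hset : {t : ℝ | 1 - G1 ((t - μ0) ^ 2 / v2) ≤ γ} = (Ioo (μ0 - a) (μ0 + a))ᶜ := by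
    ext t
    simp only [mem_setOf_eq, mem_compl_iff, mem_Ioo, not_and_or, not_lt]
    have step1 : (1 - G1 ((t - μ0) ^ 2 / v2) ≤ γ) ↔ (1 - γ ≤ G1 ((t - μ0) ^ 2 / v2)) := by
      constructor <;> intro h <;> linarith
    rw [step1, hciff]
    have step2 : (c ≤ (t - μ0) ^ 2 / v2) ↔ c * v2 ≤ (t - μ0) ^ 2 := le_div_iff₀ hv2
    rw [step2]
    have step3 : (c * v2 ≤ (t - μ0) ^ 2) ↔ a ≤ |t - μ0| := by
      rw [hadef, ← Real.sqrt_sq_eq_abs]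
      exact ⟨fun h => Real.sqrt_le_sqrt h, fun h => by
        calc c * v2 = Real.sqrt (c * v2) ^ 2 := ha2.symm
          _ ≤ Real.sqrt ((t - μ0) ^ 2) ^ 2 := by
              apply pow_le_pow_left₀ (Real.sqrt_nonneg _) h
          _ = (t - μ0) ^ 2 := Real.sq_sqrt (by positivity)⟩
    rw [step3, le_abs]
    constructor
    · rintro (h | h)
      · right; linarith
      · left; linarith
    · rintro (h | h)
      · right; linarith
      · left; linarith
  rw [hset, setIntegral_compl measurableSet_Ioo (normalPdf_integrable hv1),
    normalPdf_integral_one hv1]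
  -- now compute the middle integral
  have hmid : (∫ t in Ioo (μ0 - a) (μ0 + a), normalPdf μ0 v1 t) = G1 ((v2 / v1) * c) := by
    rw [← integral_Ioc_eq_integral_Ioo,
      ← intervalIntegral.integral_of_le (by linarith : μ0 - a ≤ μ0 + a)]
    simp_rw [normalPdf_scale hv1]
    rw [intervalIntegral.integral_const_mul]
    have e1 : (∫ t in (μ0 - a)..(μ0 + a), normalPdf 0 1 ((t - μ0) / s))
        = ∫ t in (-a)..a, normalPdf 0 1 (t / s) := by
      have := intervalIntegral.integral_comp_sub_right (a := μ0 - a) (b := μ0 + a)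
        (f := fun y => normalPdf 0 1 (y / s)) μ0
      simpa using this
    have e2 : (∫ t in (-a)..a, normalPdf 0 1 (t / s)) = s * ∫ t in (-(a/s))..(a/s), normalPdf 0 1 t := by
      have := intervalIntegral.integral_comp_div (a := -a) (b := a)
        (c := s) (f := normalPdf 0 1) hs0.ne'
      rw [this, smul_eq_mul, neg_div]
    set b : ℝ := a / s with hbdef
    have hb0 : 0 ≤ b := by positivity
    have hii : ∀ u w : ℝ, IntervalIntegrable (normalPdf 0 1) volume u w :=
      fun u w => (normalPdf_integrable one_pos).intervalIntegrable
    have e3 : (∫ t in (-b)..b, normalPdf 0 1 t)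
        = (∫ t in (-b)..(0:ℝ), normalPdf 0 1 t) + ∫ t in (0:ℝ)..b, normalPdf 0 1 t :=
      (intervalIntegral.integral_add_adjacent_intervals (hii _ _) (hii _ _)).symm
    have e4 : (∫ t in (-b)..(0:ℝ), normalPdf 0 1 t) = ∫ t in (0:ℝ)..b, normalPdf 0 1 t := by
      have := intervalIntegral.integral_comp_neg (a := (0:ℝ)) (b := b) (f := normalPdf 0 1)
      simp_rw [normalPdf_even] at this
      rw [this]
      norm_num
    have e5 : G1 (b ^ 2) = 2 * ∫ t in (0:ℝ)..b, normalPdf 0 1 t := by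
      have := G1_sqrt (x := b ^ 2) (by positivity)
      rwa [Real.sqrt_sq hb0] at this
    have hb2 : b ^ 2 = (v2 / v1) * c := by
      rw [hbdef, div_pow, ha2, hs2]; ring
    rw [e1, e2, e3, e4, ← hb2, e5, ← hsdef]
    field_simp
    ring
  rw [hmid]
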